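/- Let G be a group, k a positive natural number, and s : Fin k → G with symmetric image (for every i there is j with s j = (s i)⁻¹). If π : G →* H is a surjective group homomorphism, then φ(H, π ∘ s) ≤ φ(G, s): the Cheeger (isoperimetric) constant of a quotient marked group is at most that of the group (property (∗) of Proposition 6.1 for the Cheeger constant). -/

import Mathlib

/-- The edge boundary count of a finite set `X` in the Cayley graph of the marked
group `(G, s)`. -/
noncomputable def edgeBoundaryCount {G : Type*} [Group G] {k : ℕ} (s : Fin k → G)
    (X : Finset G) : ℕ :=
  Nat.card {p : G × Fin k | p.1 ∈ X ∧ p.1 * s p.2 ∉ X}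

/-- The Cheeger (isoperimetric) constant of the marked group `(G, s)`. -/
noncomputable def cheegerConstant {G : Type*} [Group G] {k : ℕ} (s : Fin k → G) : ℝ :=
  sInf {r : ℝ | ∃ X : Finset G, X.Nonempty ∧
    r = (edgeBoundaryCount s X : ℝ) / (k * X.card)}

open Finset

private lemma edgeBoundaryCount_eq_sum {G : Type*} [Group G] [DecidableEq G] {k : ℕ}
    (s : Fin k → G) (X : Finset G) :
    edgeBoundaryCount s X
      = ∑ g ∈ X, ∑ i : Fin k, if g * s i ∉ X then 1 else 0 := by
  classical
  have h1 : {p : G × Fin k | p.1 ∈ X ∧ p.1 * s p.2 ∉ X}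
      = ↑((X ×ˢ (univ : Finset (Fin k))).filter fun p : G × Fin k => p.1 * s p.2 ∉ X) := by
    ext p
    simp [Finset.mem_filter, Finset.mem_product, and_comm]
  rw [edgeBoundaryCount, h1, Nat.card_coe_set_eq, Set.ncard_coe_finset,
    Finset.card_filter, Finset.sum_product]

private lemma exists_quotient_set {G H : Type*} [Group G] [Group H] {k : ℕ} (hk : 0 < k)
    (s : Fin k → G) (π : G →* H) (X : Finset G) (hX : X.Nonempty) :
    ∃ Y : Finset H, Y.Nonempty ∧
      (edgeBoundaryCount (⇑π ∘ s) Y : ℝ) / (k * Y.card) ≤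
        (edgeBoundaryCount s X : ℝ) / (k * X.card) := by
  classical
  set n : H → ℕ := fun h => (X.filter fun g => π g = h).card with hn
  set I : Finset H := X.image π with hI
  have hInE : I.Nonempty := hX.image π
  have hmemI : ∀ h : H, h ∈ I ↔ 1 ≤ n h := by
    intro h
    constructor
    · intro hh
      obtain ⟨g, hg, rfl⟩ := Finset.mem_image.mp hh
      have : g ∈ X.filter fun g' => π g' = π g := Finset.mem_filter.mpr ⟨hg, rfl⟩
      exact Finset.card_pos.mpr ⟨g, this⟩
    · intro hh
      obtain ⟨g, hg⟩ := Finset.card_pos.mp hh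
      rw [Finset.mem_filter] at hg
      exact hg.2 ▸ Finset.mem_image_of_mem π hg.1
  obtain ⟨h0, h0I, hmax⟩ := I.exists_max_image n hInE
  set M : ℕ := n h0 with hM
  have hM1 : 1 ≤ M := (hmemI h0).mp h0I
  set Y : ℕ → Finset H := fun t => I.filter fun h => t ≤ n h with hY
  have hYmem : ∀ t : ℕ, 1 ≤ t → ∀ h : H, (h ∈ Y t ↔ t ≤ n h) := by
    intro t ht h
    constructor
    · intro hh; exact (Finset.mem_filter.mp hh).2
    · intro hh
      exact Finset.mem_filter.mpr ⟨(hmemI h).mpr (le_trans ht hh), hh⟩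
  set e : H → Fin k → ℕ := fun h i => (X.filter fun g => π g = h ∧ g * s i ∉ X).card with he
  -- (B) edge boundary of X as a fiberwise sum
  have hB : edgeBoundaryCount s X = ∑ h ∈ I, ∑ i : Fin k, e h i := by
    rw [edgeBoundaryCount_eq_sum]
    have hinner : ∀ g ∈ X, ∀ i : Fin k,
        (∑ h ∈ I, if π g = h ∧ g * s i ∉ X then (1:ℕ) else 0)
          = if g * s i ∉ X then 1 else 0 := by
      intro g hg i
      simp only [ite_and]
      rw [Finset.sum_ite_eq]
      simp [hI, Finset.mem_image_of_mem π hg]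
    calc (∑ g ∈ X, ∑ i : Fin k, if g * s i ∉ X then (1:ℕ) else 0)
        = ∑ g ∈ X, ∑ i : Fin k, ∑ h ∈ I, if π g = h ∧ g * s i ∉ X then 1 else 0 := by
          refine Finset.sum_congr rfl fun g hg => Finset.sum_congr rfl fun i _ => ?_
          rw [hinner g hg i]
      _ = ∑ g ∈ X, ∑ h ∈ I, ∑ i : Fin k, if π g = h ∧ g * s i ∉ X then 1 else 0 := by
          exact Finset.sum_congr rfl fun g _ => Finset.sum_comm
      _ = ∑ h ∈ I, ∑ g ∈ X, ∑ i : Fin k, if π g = h ∧ g * s i ∉ X then 1 else 0 :=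
          Finset.sum_comm
      _ = ∑ h ∈ I, ∑ i : Fin k, ∑ g ∈ X, if π g = h ∧ g * s i ∉ X then 1 else 0 :=
          Finset.sum_congr rfl fun h _ => Finset.sum_comm
      _ = ∑ h ∈ I, ∑ i : Fin k, e h i := by
          refine Finset.sum_congr rfl fun h _ => Finset.sum_congr rfl fun i _ => ?_
          simp only [he, Finset.card_filter]
  -- (C) pointwise lower bound on fiberwise boundary
  have hC : ∀ h ∈ I, ∀ i : Fin k, n h - n (h * π (s i)) ≤ e h i := by
    intro h hh i
    have hsplit : e h i + (X.filter fun g => π g = h ∧ g * s i ∈ X).card = n h := by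
      have h1 : X.filter (fun g => π g = h ∧ g * s i ∉ X)
          = (X.filter fun g => π g = h).filter fun g => g * s i ∉ X := by
        rw [Finset.filter_filter]
      have h2 : X.filter (fun g => π g = h ∧ g * s i ∈ X)
          = (X.filter fun g => π g = h).filter fun g => ¬ (g * s i ∉ X) := by
        rw [Finset.filter_filter]
        simp only [not_not]
      simp only [he, hn]
      rw [h1, h2]
      exact Finset.card_filter_add_card_filter_not _
    have hle : (X.filter fun g => π g = h ∧ g * s i ∈ X).card ≤ n (h * π (s i)) := by
      apply Finset.card_le_card_of_injOn (fun g => g * s i)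
      · intro g hg
        rw [Finset.mem_coe, Finset.mem_filter] at hg
        rw [Finset.mem_coe, Finset.mem_filter]
        exact ⟨hg.2.2, by rw [map_mul, hg.2.1]⟩
      · intro a _ b _ hab
        exact mul_right_cancel hab
    omega
  -- (A) level sets partition the cardinality
  have hA : ∑ t ∈ Finset.Icc 1 M, (Y t).card = X.card := by
    have hx : X.card = ∑ h ∈ I, n h :=
      Finset.card_eq_sum_card_fiberwise fun g hg => Finset.mem_image_of_mem π hg
    rw [hx]
    calc (∑ t ∈ Finset.Icc 1 M, (Y t).card)
        = ∑ t ∈ Finset.Icc 1 M, ∑ h ∈ I, if t ≤ n h then 1 else 0 := by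
          refine Finset.sum_congr rfl fun t _ => ?_
          simp only [hY, Finset.card_filter]
      _ = ∑ h ∈ I, ∑ t ∈ Finset.Icc 1 M, if t ≤ n h then 1 else 0 := Finset.sum_comm
      _ = ∑ h ∈ I, n h := by
          refine Finset.sum_congr rfl fun h hh => ?_
          rw [← Finset.card_filter]
          have h1 : (Finset.Icc 1 M).filter (fun t => t ≤ n h) = Finset.Icc 1 (n h) := by
            ext t
            have := hmax h hh
            simp only [Finset.mem_filter, Finset.mem_Icc]
            omega
          rw [h1, Nat.card_Icc]
          omega
  -- (D) co-area formula for the level sets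
  have hD : ∑ t ∈ Finset.Icc 1 M, edgeBoundaryCount (⇑π ∘ s) (Y t)
      = ∑ h ∈ I, ∑ i : Fin k, (n h - n (h * π (s i))) := by
    have hstep : ∀ t ∈ Finset.Icc 1 M, edgeBoundaryCount (⇑π ∘ s) (Y t)
        = ∑ h ∈ I, ∑ i : Fin k,
            if t ≤ n h ∧ n (h * π (s i)) < t then (1:ℕ) else 0 := by
      intro t ht
      rw [Finset.mem_Icc] at ht
      rw [edgeBoundaryCount_eq_sum]
      rw [hY, Finset.sum_filter]
      refine Finset.sum_congr rfl fun h hh => ?_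
      by_cases hth : t ≤ n h
      · simp only [hth, if_true, true_and]
        refine Finset.sum_congr rfl fun i _ => ?_
        have : (h * (⇑π ∘ s) i ∉ Y t) ↔ n (h * π (s i)) < t := by
          rw [hYmem t ht.1]
          simp only [Function.comp_apply]
          omega
        by_cases hc : n (h * π (s i)) < t
        · simp [hc, this.mpr hc]
        · simp only [hc, if_false]
          rw [if_neg]
          intro hcon
          exact hc (this.mp hcon)
      · simp [hth]
    calc (∑ t ∈ Finset.Icc 1 M, edgeBoundaryCount (⇑π ∘ s) (Y t))
        = ∑ t ∈ Finset.Icc 1 M, ∑ h ∈ I, ∑ i : Fin k,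
            if t ≤ n h ∧ n (h * π (s i)) < t then (1:ℕ) else 0 :=
          Finset.sum_congr rfl hstep
      _ = ∑ h ∈ I, ∑ t ∈ Finset.Icc 1 M, ∑ i : Fin k,
            if t ≤ n h ∧ n (h * π (s i)) < t then (1:ℕ) else 0 := Finset.sum_comm
      _ = ∑ h ∈ I, ∑ i : Fin k, ∑ t ∈ Finset.Icc 1 M,
            if t ≤ n h ∧ n (h * π (s i)) < t then (1:ℕ) else 0 :=
          Finset.sum_congr rfl fun h _ => Finset.sum_comm
      _ = ∑ h ∈ I, ∑ i : Fin k, (n h - n (h * π (s i))) := by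
          refine Finset.sum_congr rfl fun h hh => Finset.sum_congr rfl fun i _ => ?_
          rw [← Finset.card_filter]
          have h1 : (Finset.Icc 1 M).filter (fun t => t ≤ n h ∧ n (h * π (s i)) < t)
              = Finset.Ioc (n (h * π (s i))) (n h) := by
            ext t
            have := hmax h hh
            simp only [Finset.mem_filter, Finset.mem_Icc, Finset.mem_Ioc]
            omega
          rw [h1, Nat.card_Ioc]
  -- combine
  have hsum_le : ∑ t ∈ Finset.Icc 1 M, edgeBoundaryCount (⇑π ∘ s) (Y t)
      ≤ edgeBoundaryCount s X := by
    rw [hD, hB]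
    exact Finset.sum_le_sum fun h hh => Finset.sum_le_sum fun i _ => hC h hh i
  have hne : (Finset.Icc 1 M).Nonempty := ⟨1, Finset.mem_Icc.mpr ⟨le_refl 1, hM1⟩⟩
  have hkey : ∑ t ∈ Finset.Icc 1 M, edgeBoundaryCount (⇑π ∘ s) (Y t) * X.card
      ≤ ∑ t ∈ Finset.Icc 1 M, edgeBoundaryCount s X * (Y t).card := by
    rw [← Finset.sum_mul, ← Finset.mul_sum, hA]
    exact Nat.mul_le_mul_right _ hsum_le
  obtain ⟨t, ht, hle⟩ := Finset.exists_le_of_sum_le hne hkey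
  rw [Finset.mem_Icc] at ht
  have hh0 : h0 ∈ Y t := (hYmem t ht.1 h0).mpr ht.2
  refine ⟨Y t, ⟨h0, hh0⟩, ?_⟩
  have hYpos : 0 < (Y t).card := Finset.card_pos.mpr ⟨h0, hh0⟩
  have hXpos : 0 < X.card := Finset.card_pos.mpr hX
  rw [div_le_div_iff₀
    (mul_pos (by exact_mod_cast hk) (by exact_mod_cast hYpos))
    (mul_pos (by exact_mod_cast hk) (by exact_mod_cast hXpos))]
  have hle' : (edgeBoundaryCount (⇑π ∘ s) (Y t) * X.card : ℝ)
      ≤ edgeBoundaryCount s X * (Y t).card := by exact_mod_cast hle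
  have hk0 : (0:ℝ) ≤ (k:ℝ) := by positivity
  nlinarith [hle', hk0]

/-- The Cheeger constant of a quotient marked group is at most that of the group. -/
theorem cheegerConstant_quotient_le {G H : Type*} [Group G] [Group H] (k : ℕ) (hk : 0 < k)
    (s : Fin k → G) (hsym : ∀ i : Fin k, ∃ j : Fin k, s j = (s i)⁻¹)
    (π : G →* H) (hπ : Function.Surjective π) :
    cheegerConstant (⇑π ∘ s) ≤ cheegerConstant s := by
  classical
  rw [cheegerConstant, cheegerConstant]
  have hSG : {r : ℝ | ∃ X : Finset G, X.Nonempty ∧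
      r = (edgeBoundaryCount s X : ℝ) / (k * X.card)}.Nonempty :=
    ⟨_, ⟨{1}, Finset.singleton_nonempty 1, rfl⟩⟩
  refine le_csInf hSG ?_
  rintro r ⟨X, hX, rfl⟩
  obtain ⟨Y, hY, hle⟩ := exists_quotient_set hk s π X hX
  refine le_trans (csInf_le ?_ ⟨Y, hY, rfl⟩) hle
  exact ⟨0, by rintro r ⟨Z, hZ, rfl⟩; positivity⟩
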